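/- Let m1, m2, r, p be positive integers, ρ1 ≥ 0, let H be a real p×m1 matrix, H_{ρ1} = I_{m1} + ρ1 Hᵀ H, and W ∈ ℂ^{m1×m2}. Define h(X,Y) = ½(‖XY−W‖_F² + ρ1‖HXY‖_F²), ∇_X h(X,Y) = (XY−W)Y* + ρ1 HᵀH X Y Y*, and ∇_Y h(X,Y) = X*(XY−W) + ρ1 X* HᵀH X Y. Then for all X, ΔX ∈ ℂ^{m1×r} and Y, ΔY ∈ ℂ^{r×m2}: (1) h(X+ΔX, Y) ≤ h(X,Y) + Re tr((∇_X h(X,Y))* ΔX) + (L_1(Y)/2)‖ΔX‖_F² with L_1(Y) = ‖H_{ρ1}‖_2 ‖Y Y*‖_2, and (2) h(X, Y+ΔY) ≤ h(X,Y) + Re tr((∇_Y h(X,Y))* ΔY) + (L_2(X)/2)‖ΔY‖_F² with L_2(X) = ‖X* H_{ρ1} X‖_2. -/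

import Mathlib

open Matrix Complex BigOperators

noncomputable section

/-- Squared Frobenius norm of a complex matrix. -/
def frobSqC {a b : ℕ} (M : Matrix (Fin a) (Fin b) ℂ) : ℝ :=
  ∑ i, ∑ j, ‖M i j‖ ^ 2

/-- Frobenius norm of a complex matrix. -/
def frobNorm {a b : ℕ} (M : Matrix (Fin a) (Fin b) ℂ) : ℝ :=
  Real.sqrt (frobSqC M)

/-- Spectral norm (largest singular value) of a complex matrix. -/
def specNorm {a b : ℕ} (M : Matrix (Fin a) (Fin b) ℂ) : ℝ :=
  ‖LinearMap.toContinuousLinearMap (Matrix.toEuclideanLin M)‖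

/-- The objective `h(X,Y) = ½(‖XY−W‖_F² + ρ1‖HXY‖_F²)`. -/
def hObj {m1 m2 r p : ℕ} (ρ1 : ℝ) (H : Matrix (Fin p) (Fin m1) ℝ)
    (W : Matrix (Fin m1) (Fin m2) ℂ)
    (X : Matrix (Fin m1) (Fin r) ℂ) (Y : Matrix (Fin r) (Fin m2) ℂ) : ℝ :=
  (1 / 2) * (frobSqC (X * Y - W) + ρ1 * frobSqC ((H.map Complex.ofReal) * (X * Y)))

/- ### Auxiliary lemmas -/

lemma frobSqC_nonneg {a b : ℕ} (M : Matrix (Fin a) (Fin b) ℂ) : 0 ≤ frobSqC M := by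
  apply Finset.sum_nonneg; intro i _; apply Finset.sum_nonneg; intro j _; positivity

lemma frobNorm_sq {a b : ℕ} (M : Matrix (Fin a) (Fin b) ℂ) : frobNorm M ^ 2 = frobSqC M :=
  Real.sq_sqrt (frobSqC_nonneg M)

lemma specNorm_nonneg {a b : ℕ} (M : Matrix (Fin a) (Fin b) ℂ) : 0 ≤ specNorm M :=
  norm_nonneg _

lemma frobSqC_col {a b : ℕ} (M : Matrix (Fin a) (Fin b) ℂ) :
    frobSqC M = ∑ j, ∑ i, ‖M i j‖ ^ 2 := by
  rw [frobSqC, Finset.sum_comm]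

lemma frobSqC_conjT {a b : ℕ} (M : Matrix (Fin a) (Fin b) ℂ) : frobSqC Mᴴ = frobSqC M := by
  rw [frobSqC, frobSqC, Finset.sum_comm]
  simp [conjTranspose_apply]

lemma trace_form {a b : ℕ} (M N : Matrix (Fin a) (Fin b) ℂ) :
    (Mᴴ * N).trace = ∑ j, ∑ i, (starRingEnd ℂ) (M i j) * N i j := by
  simp [Matrix.trace, Matrix.mul_apply, Matrix.diag, conjTranspose_apply]

lemma abs_add_sq (a c : ℂ) : ‖a+c‖^2
    = ‖a‖^2 + 2*(((starRingEnd ℂ) a) * c).re + ‖c‖^2 := by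
  simp only [Complex.sq_norm, Complex.normSq_add, Complex.normSq_apply, Complex.mul_re,
    Complex.conj_re, Complex.conj_im, Complex.add_re, Complex.add_im]
  ring

lemma frob_expand' {a b : ℕ} (M N : Matrix (Fin a) (Fin b) ℂ) :
    frobSqC (M + N) = frobSqC M + 2 * ((Mᴴ * N).trace).re + frobSqC N := by
  rw [trace_form, frobSqC, frobSqC, frobSqC, Complex.re_sum, Finset.sum_comm (γ := Fin a)]
  simp only [Matrix.add_apply, abs_add_sq, Complex.re_sum, Finset.sum_add_distrib,
    Finset.mul_sum]
  congr 1
  congr 1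
  · rw [Finset.sum_comm]
  · rw [Finset.sum_comm]

lemma dot_self_re {n : ℕ} (v : Fin n → ℂ) :
    (star v ⬝ᵥ v).re = ∑ i, ‖v i‖^2 := by
  simp [dotProduct, Complex.re_sum, Pi.star_apply, Complex.sq_norm,
    Complex.mul_re, Complex.conj_re, Complex.conj_im, Complex.normSq_apply]

lemma key_bound {n : ℕ} (A : Matrix (Fin n) (Fin n) ℂ) (v : Fin n → ℂ) :
    (star v ⬝ᵥ A.mulVec v).re ≤ specNorm A * ∑ i, ‖v i‖^2 := by
  set v' : EuclideanSpace ℂ (Fin n) := (WithLp.equiv 2 _).symm v with hv'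
  have hnorm : ‖v'‖^2 = ∑ i, ‖v i‖^2 := by
    rw [EuclideanSpace.norm_eq, Real.sq_sqrt (by positivity)]
    simp [hv']
  have hinner : (inner ℂ v' (Matrix.toEuclideanLin A v') : ℂ) = star v ⬝ᵥ A.mulVec v := by
    simp [PiLp.inner_apply, dotProduct, Matrix.toEuclideanLin_apply_piLp_toLp,
      hv', RCLike.inner_apply, mul_comm]
  have h1 : (inner ℂ v' (Matrix.toEuclideanLin A v') : ℂ).re ≤ ‖v'‖ * ‖Matrix.toEuclideanLin A v'‖ := by
    calc (inner ℂ v' (Matrix.toEuclideanLin A v') : ℂ).re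
        ≤ ‖(inner ℂ v' (Matrix.toEuclideanLin A v') : ℂ)‖ := Complex.re_le_norm _
      _ ≤ _ := norm_inner_le_norm _ _
  have h2 : ‖Matrix.toEuclideanLin A v'‖ ≤ specNorm A * ‖v'‖ := by
    have := (LinearMap.toContinuousLinearMap (Matrix.toEuclideanLin A)).le_opNorm v'
    rw [LinearMap.coe_toContinuousLinearMap'] at this
    exact this
  have h3 : ‖v'‖ * ‖Matrix.toEuclideanLin A v'‖ ≤ specNorm A * ‖v'‖^2 := by
    nlinarith [norm_nonneg v', norm_nonneg (Matrix.toEuclideanLin A v')]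
  rw [← hinner, ← hnorm]
  linarith

lemma col_mul {a b k : ℕ} (P : Matrix (Fin a) (Fin b) ℂ) (M : Matrix (Fin b) (Fin k) ℂ)
    (j : Fin k) : (fun i => (P * M) i j) = P.mulVec (fun i => M i j) := by
  funext i
  simp [Matrix.mul_apply, Matrix.mulVec, dotProduct]

lemma quad_conj {a b : ℕ} (B : Matrix (Fin a) (Fin b) ℂ) (A : Matrix (Fin a) (Fin a) ℂ)
    (v : Fin b → ℂ) :
    star v ⬝ᵥ ((Bᴴ * A * B).mulVec v) = star (B.mulVec v) ⬝ᵥ (A.mulVec (B.mulVec v)) := by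
  rw [Matrix.star_mulVec, ← Matrix.mulVec_mulVec, ← Matrix.mulVec_mulVec,
    Matrix.dotProduct_mulVec (star v)]

lemma sum_col_quad_le {n k : ℕ} (A : Matrix (Fin n) (Fin n) ℂ) (M : Matrix (Fin n) (Fin k) ℂ) :
    ∑ j, (star (fun i => M i j) ⬝ᵥ A.mulVec (fun i => M i j)).re ≤ specNorm A * frobSqC M := by
  rw [frobSqC_col, Finset.mul_sum]
  exact Finset.sum_le_sum fun j _ => key_bound A _

lemma mapHH {p n : ℕ} (H : Matrix (Fin p) (Fin n) ℝ) :
    (Hᵀ * H).map Complex.ofReal = (H.map Complex.ofReal)ᴴ * (H.map Complex.ofReal) := by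
  ext i j
  simp [Matrix.mul_apply, Matrix.map_apply, conjTranspose_apply, Matrix.transpose_apply,
    Complex.conj_ofReal]

lemma remainder_eq {p n k : ℕ} (ρ1 : ℝ) (Hc : Matrix (Fin p) (Fin n) ℂ)
    (M : Matrix (Fin n) (Fin k) ℂ) :
    frobSqC M + ρ1 * frobSqC (Hc * M)
      = ∑ j, ((star (fun i => M i j)) ⬝ᵥ
          (((1 : Matrix (Fin n) (Fin n) ℂ) + (ρ1:ℂ) • (Hcᴴ * Hc)).mulVec (fun i => M i j))).re := by
  have hq : ∀ v : Fin n → ℂ,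
      ((star v) ⬝ᵥ (((1 : Matrix (Fin n) (Fin n) ℂ) + (ρ1:ℂ) • (Hcᴴ * Hc)).mulVec v)).re
        = (∑ i, ‖v i‖^2) + ρ1 * ∑ i, ‖(Hc.mulVec v) i‖^2 := by
    intro v
    have hcc : star v ⬝ᵥ ((Hcᴴ * Hc).mulVec v) = star (Hc.mulVec v) ⬝ᵥ (Hc.mulVec v) := by
      have := quad_conj Hc 1 v
      rw [Matrix.mul_one] at this
      rw [this, Matrix.one_mulVec]
    rw [Matrix.add_mulVec, Matrix.one_mulVec, Matrix.smul_mulVec,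
      dotProduct_add, dotProduct_smul, hcc]
    rw [← dot_self_re, ← dot_self_re]
    simp [Complex.add_re, Complex.smul_re]
  rw [frobSqC_col M, frobSqC_col (Hc * M)]
  have h2 : ∀ j, ((star (fun i => M i j)) ⬝ᵥ
      (((1 : Matrix (Fin n) (Fin n) ℂ) + (ρ1:ℂ) • (Hcᴴ * Hc)).mulVec (fun i => M i j))).re
      = (∑ i, ‖M i j‖^2) + ρ1 * ∑ i, ‖(Hc * M) i j‖^2 := by
    intro j
    rw [hq, ← col_mul]
  rw [Finset.sum_congr rfl (fun j _ => h2 j), Finset.sum_add_distrib, ← Finset.mul_sum]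

lemma frob_mul_right_le {n k m : ℕ} (Δ : Matrix (Fin n) (Fin k) ℂ)
    (Y : Matrix (Fin k) (Fin m) ℂ) :
    frobSqC (Δ * Y) ≤ specNorm (Y * Yᴴ) * frobSqC Δ := by
  rw [← frobSqC_conjT (Δ * Y), Matrix.conjTranspose_mul, ← frobSqC_conjT Δ]
  have h : ∀ j, (fun i => (Yᴴ * Δᴴ) i j) = Yᴴ.mulVec (fun i => Δᴴ i j) := col_mul _ _
  calc frobSqC (Yᴴ * Δᴴ)
      = ∑ j, (star (Yᴴ.mulVec (fun i => Δᴴ i j)) ⬝ᵥ (Yᴴ.mulVec (fun i => Δᴴ i j))).re := by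
        rw [frobSqC_col]
        congr 1
        funext j
        rw [dot_self_re, ← h]
    _ = ∑ j, (star (fun i => Δᴴ i j) ⬝ᵥ ((Y * Yᴴ).mulVec (fun i => Δᴴ i j))).re := by
        congr 1
        funext j
        have := quad_conj Yᴴ 1 (fun i => Δᴴ i j)
        rw [Matrix.mul_one, Matrix.conjTranspose_conjTranspose] at this
        rw [this, Matrix.one_mulVec]
    _ ≤ specNorm (Y * Yᴴ) * frobSqC Δᴴ := sum_col_quad_le _ _

lemma trace_smul_split {a b : ℕ} (ρ1 : ℝ) (M₁ M₂ N : Matrix (Fin a) (Fin b) ℂ) :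
    (((M₁ + (ρ1:ℂ) • M₂)ᴴ * N).trace).re = ((M₁ᴴ * N).trace).re + ρ1 * ((M₂ᴴ * N).trace).re := by
  rw [Matrix.conjTranspose_add, Matrix.conjTranspose_smul, Matrix.add_mul, Matrix.trace_add,
    Matrix.smul_mul, Matrix.trace_smul]
  simp [Complex.add_re, Complex.smul_re, Complex.conj_ofReal]

/-- the block descent lemma for
`h(X,Y) = ½(‖XY−W‖_F² + ρ1‖HXY‖_F²)`. -/
theorem block_descent_lemma (m1 m2 r p : ℕ)
    (hm1 : 0 < m1) (hm2 : 0 < m2) (hr : 0 < r) (hp : 0 < p)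
    (ρ1 : ℝ) (hρ1 : 0 ≤ ρ1)
    (H : Matrix (Fin p) (Fin m1) ℝ)
    (W : Matrix (Fin m1) (Fin m2) ℂ) :
    ∀ (X ΔX : Matrix (Fin m1) (Fin r) ℂ) (Y ΔY : Matrix (Fin r) (Fin m2) ℂ),
      (hObj ρ1 H W (X + ΔX) Y ≤
        hObj ρ1 H W X Y +
          ((((X * Y - W) * Yᴴ +
              (ρ1 : ℂ) • (((Hᵀ * H).map Complex.ofReal) * X * Y * Yᴴ))ᴴ * ΔX).trace).re +
          (specNorm ((1 : Matrix (Fin m1) (Fin m1) ℂ) +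
              (ρ1 : ℂ) • ((Hᵀ * H).map Complex.ofReal)) * specNorm (Y * Yᴴ) / 2) *
            frobNorm ΔX ^ 2) ∧
      (hObj ρ1 H W X (Y + ΔY) ≤
        hObj ρ1 H W X Y +
          (((Xᴴ * (X * Y - W) +
              (ρ1 : ℂ) • (Xᴴ * ((Hᵀ * H).map Complex.ofReal) * X * Y))ᴴ * ΔY).trace).re +
          (specNorm (Xᴴ * ((1 : Matrix (Fin m1) (Fin m1) ℂ) +
              (ρ1 : ℂ) • ((Hᵀ * H).map Complex.ofReal)) * X) / 2) *
            frobNorm ΔY ^ 2) := by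
  intro X ΔX Y ΔY
  set Hc : Matrix (Fin p) (Fin m1) ℂ := H.map Complex.ofReal with hHc
  set A : Matrix (Fin m1) (Fin m1) ℂ :=
    (1 : Matrix (Fin m1) (Fin m1) ℂ) + (ρ1:ℂ) • ((Hᵀ * H).map Complex.ofReal) with hA
  have hAHc : A = (1 : Matrix (Fin m1) (Fin m1) ℂ) + (ρ1:ℂ) • (Hcᴴ * Hc) := by
    rw [hA, mapHH]
  constructor
  · -- part 1
    have e1 : (X + ΔX) * Y - W = (X * Y - W) + ΔX * Y := by rw [Matrix.add_mul]; abel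
    have e2 : Hc * ((X + ΔX) * Y) = Hc * (X * Y) + Hc * (ΔX * Y) := by rw [Matrix.add_mul, Matrix.mul_add]
    have hexp : hObj ρ1 H W (X + ΔX) Y
        = hObj ρ1 H W X Y
          + ((((X * Y - W)ᴴ * (ΔX * Y)).trace).re
             + ρ1 * (((Hc * (X * Y))ᴴ * (Hc * (ΔX * Y))).trace).re)
          + (1/2) * (frobSqC (ΔX * Y) + ρ1 * frobSqC (Hc * (ΔX * Y))) := by
      rw [hObj, hObj, ← hHc, e1, e2, frob_expand', frob_expand']
      ring
    have htr : ((((X * Y - W) * Yᴴ +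
          (ρ1 : ℂ) • (((Hᵀ * H).map Complex.ofReal) * X * Y * Yᴴ))ᴴ * ΔX).trace).re
        = (((X * Y - W)ᴴ * (ΔX * Y)).trace).re
          + ρ1 * (((Hc * (X * Y))ᴴ * (Hc * (ΔX * Y))).trace).re := by
      rw [trace_smul_split]
      congr 2
      · rw [Matrix.conjTranspose_mul, Matrix.conjTranspose_conjTranspose, Matrix.mul_assoc,
          Matrix.trace_mul_comm, Matrix.mul_assoc]
      · rw [mapHH, ← hHc]
        simp only [Matrix.conjTranspose_mul, Matrix.conjTranspose_conjTranspose,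
          Matrix.mul_assoc]
        rw [Matrix.trace_mul_comm]
        simp only [Matrix.mul_assoc]
    have h1 : frobSqC (ΔX * Y) + ρ1 * frobSqC (Hc * (ΔX * Y))
        = ∑ j, ((star (fun i => (ΔX * Y) i j)) ⬝ᵥ (A.mulVec (fun i => (ΔX * Y) i j))).re := by
      rw [hAHc]
      exact remainder_eq ρ1 Hc (ΔX * Y)
    have h2 := sum_col_quad_le A (ΔX * Y)
    have h3 := frob_mul_right_le ΔX Y
    have h4 := specNorm_nonneg A
    have h5 := frobNorm_sq ΔX
    have h6 := mul_le_mul_of_nonneg_left h3 h4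
    rw [hexp, htr, h5]
    linarith [h1, h2, h6]
  · -- part 2
    have e1 : X * (Y + ΔY) - W = (X * Y - W) + X * ΔY := by rw [Matrix.mul_add]; abel
    have e2 : Hc * (X * (Y + ΔY)) = Hc * (X * Y) + Hc * (X * ΔY) := by rw [Matrix.mul_add, Matrix.mul_add]
    have hexp : hObj ρ1 H W X (Y + ΔY)
        = hObj ρ1 H W X Y
          + ((((X * Y - W)ᴴ * (X * ΔY)).trace).re
             + ρ1 * (((Hc * (X * Y))ᴴ * (Hc * (X * ΔY))).trace).re)
          + (1/2) * (frobSqC (X * ΔY) + ρ1 * frobSqC (Hc * (X * ΔY))) := by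
      rw [hObj, hObj, ← hHc, e1, e2, frob_expand', frob_expand']
      ring
    have htr : (((Xᴴ * (X * Y - W) +
          (ρ1 : ℂ) • (Xᴴ * ((Hᵀ * H).map Complex.ofReal) * X * Y))ᴴ * ΔY).trace).re
        = (((X * Y - W)ᴴ * (X * ΔY)).trace).re
          + ρ1 * (((Hc * (X * Y))ᴴ * (Hc * (X * ΔY))).trace).re := by
      rw [trace_smul_split]
      congr 2
      · simp only [Matrix.conjTranspose_mul, Matrix.conjTranspose_conjTranspose,
          Matrix.mul_assoc]
      · rw [mapHH, ← hHc]
        simp only [Matrix.conjTranspose_mul, Matrix.conjTranspose_conjTranspose,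
          Matrix.mul_assoc]
    have h1 : frobSqC (X * ΔY) + ρ1 * frobSqC (Hc * (X * ΔY))
        = ∑ j, ((star (fun i => ΔY i j)) ⬝ᵥ ((Xᴴ * A * X).mulVec (fun i => ΔY i j))).re := by
      rw [hAHc, remainder_eq ρ1 Hc (X * ΔY), ← hAHc]
      refine Finset.sum_congr rfl fun j _ => ?_
      rw [col_mul, quad_conj]
    have h2 := sum_col_quad_le (Xᴴ * A * X) ΔY
    have h5 := frobNorm_sq ΔY
    rw [hexp, htr, h5]
    linarith [h1, h2]
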